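/- For every integer p ≥ 2 and every complex number s with Re s > 1 such that 2s is not an integer, (Γ(1/2−s)/(√π·Γ(s)))·∫_0^∞ x^{2s−1}·( coth(px)/sinh(2x) − 1/(2p·sinh²(x)) ) dx = (1/cos(πs))·( ∑_{m,n≥0} (1+2m+pn)^{−2s} + ∑_{m,n≥0} (1+p+2m+pn)^{−2s} − (1/p)·ζ(2s−1) ). -/

import Mathlib

set_option maxHeartbeats 1000000


open Real Complex MeasureTheory

/-- The elliptic fixed-point integrand `g_p(x) = coth(px)/sinh(2x) - 1/(2p sinh²x)`. -/
noncomputable def ellipticIntegrand (p : ℕ) (x : ℝ) : ℝ :=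
  Real.cosh (p * x) / Real.sinh (p * x) / Real.sinh (2 * x) -
    1 / (2 * p * Real.sinh x ^ 2)

noncomputable def myA (p : ℕ) : (ℕ×ℕ) ⊕ ((ℕ×ℕ) ⊕ ℕ) → ℝ :=
  Sum.elim (fun _ => 2) (Sum.elim (fun _ => 2) (fun k => -(2/(p:ℝ)) * ((k:ℝ)+1)))

noncomputable def myP (p : ℕ) : (ℕ×ℕ) ⊕ ((ℕ×ℕ) ⊕ ℕ) → ℝ :=
  Sum.elim (fun mn => 2*(1 + 2*(mn.1:ℝ) + p*mn.2))
    (Sum.elim (fun mn => 2*(1 + (p:ℝ) + 2*(mn.1:ℝ) + p*mn.2)) (fun k => 2*((k:ℝ)+1)))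

theorem myHasSum_sumElim {M ι κ : Type*} [AddCommMonoid M] [TopologicalSpace M] [ContinuousAdd M]
    {f : ι → M} {g : κ → M} {a b : M} (hf : HasSum f a) (hg : HasSum g b) :
    HasSum (Sum.elim f g) (a + b) := by
  refine HasSum.add_isCompl Set.isCompl_range_inl_range_inr ?_ ?_
  · exact ((Equiv.ofInjective Sum.inl Sum.inl_injective).hasSum_iff).1 hf
  · exact ((Equiv.ofInjective Sum.inr Sum.inr_injective).hasSum_iff).1 hg

theorem mySummable_shift {t : ℝ} (ht : 1 < t) :
    Summable (fun n : ℕ => ((n : ℝ) + 1) ^ (-t)) := by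
  have h := (Real.summable_nat_rpow (p := -t)).2 (by linarith)
  have := h.comp_injective (add_left_injective 1)
  refine this.congr fun n => ?_
  simp [Function.comp]

theorem myKeySummable (p : ℕ) (hp : 2 ≤ p) (c : ℝ) (hc : 0 ≤ c) {r : ℝ} (hr : 2 < r) :
    Summable (fun mn : ℕ × ℕ => (1 + c + 2 * (mn.1 : ℝ) + p * mn.2) ^ (-r)) := by
  have h2 : 1 < r / 2 := by linarith
  have hm := mySummable_shift h2
  have hprod := hm.mul_of_nonneg hm (fun m => Real.rpow_nonneg (by positivity) _)
    (fun n => Real.rpow_nonneg (by positivity) _)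
  refine Summable.of_nonneg_of_le (fun mn => Real.rpow_nonneg ?_ _) (fun mn => ?_) hprod
  · have h1 : (0:ℝ) ≤ (mn.1 : ℝ) := Nat.cast_nonneg _
    have h2 : (0:ℝ) ≤ (mn.2 : ℝ) := Nat.cast_nonneg _
    positivity
  · obtain ⟨m, n⟩ := mn
    simp only
    set A : ℝ := 1 + c + 2 * (m : ℝ) + p * n with hA
    have hm0 : (0:ℝ) ≤ (m:ℝ) := Nat.cast_nonneg _
    have hn0 : (0:ℝ) ≤ (n:ℝ) := Nat.cast_nonneg _
    have hp2 : (2:ℝ) ≤ (p:ℝ) := by exact_mod_cast hp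
    have hA1 : (1:ℝ) ≤ A := by nlinarith
    have hA2 : 1 + (m:ℝ) + n ≤ A := by nlinarith
    have hprod_le : ((m:ℝ) + 1) * ((n:ℝ) + 1) ≤ A ^ 2 := by
      nlinarith [sq_nonneg ((m:ℝ) - n), sq_nonneg ((m:ℝ) + n)]
    rw [← Real.mul_rpow (by positivity) (by positivity)]
    have h1 : A ^ (-r) = (A ^ (2:ℕ)) ^ (-(r/2)) := by
      rw [← Real.rpow_natCast A 2, ← Real.rpow_mul (by linarith)]
      ring_nf
    rw [h1]
    exact Real.rpow_le_rpow_of_nonpos (by positivity) hprod_le (by linarith)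

theorem myClosedForm (p : ℕ) (hp : 2 ≤ p) {t : ℝ} (ht : 0 < t) :
    ellipticIntegrand p t =
      2 * rexp (-(2*t)) * (1 - rexp (-(2*t))^2)⁻¹ * (1 - rexp (-(2*(p:ℝ)*t)))⁻¹
      + 2 * rexp (-(2*t)) * rexp (-(2*(p:ℝ)*t)) * (1 - rexp (-(2*t))^2)⁻¹ * (1 - rexp (-(2*(p:ℝ)*t)))⁻¹
      - (2 / p) * (rexp (-(2*t)) / (1 - rexp (-(2*t)))^2) := by
  have hp0 : (0:ℝ) < p := by positivity
  have hp0' : (p:ℝ) ≠ 0 := ne_of_gt hp0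
  set X := rexp (-(2*t)) with hX_def
  set Y := rexp (-(2*(p:ℝ)*t)) with hY_def
  have hX0 : 0 < X := Real.exp_pos _
  have hX1 : X < 1 := by rw [hX_def]; apply Real.exp_lt_one_iff.2; nlinarith
  have hY0 : 0 < Y := Real.exp_pos _
  have hY1 : Y < 1 := by rw [hY_def]; apply Real.exp_lt_one_iff.2; nlinarith
  have hX0' : X ≠ 0 := ne_of_gt hX0
  have h4 : (1:ℝ) - X^2 ≠ 0 := by nlinarith
  have h5 : (1:ℝ) - Y ≠ 0 := by nlinarith
  have h3 : (1:ℝ) - X ≠ 0 := by nlinarith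
  have hsinh2 : Real.sinh (2*t) = (X⁻¹ - X) / 2 := by
    rw [Real.sinh_eq, hX_def, ← Real.exp_neg]; ring_nf
  have hsinhsq : Real.sinh t ^ 2 = (X⁻¹ + X - 2) / 4 := by
    have e1 : X = rexp (-t) ^ 2 := by
      rw [hX_def, show -(2*t) = ((2:ℕ):ℝ)*(-t) by push_cast; ring, Real.exp_nat_mul]
    rw [Real.sinh_eq, e1, Real.exp_neg]
    have hE : (0:ℝ) < rexp t := Real.exp_pos t
    field_simp
    ring
  have hcoth : Real.cosh ((p:ℝ)*t) / Real.sinh ((p:ℝ)*t) = (1+Y)/(1-Y) := by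
    set A := rexp ((p:ℝ)*t) with hA_def
    set B := rexp (-((p:ℝ)*t)) with hB_def
    have hAB : A * B = 1 := by rw [hA_def, hB_def, ← Real.exp_add]; simp
    have hA1 : 1 < A := by
      rw [hA_def, show (1:ℝ) = rexp 0 from (Real.exp_zero).symm]
      exact Real.exp_lt_exp.2 (by positivity)
    have hB1 : B < 1 := by rw [hB_def]; apply Real.exp_lt_one_iff.2; nlinarith
    have hB0 : 0 < B := Real.exp_pos _
    have hABne : A - B ≠ 0 := by nlinarith
    have hB2 : (1:ℝ) - B^2 ≠ 0 := by nlinarith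
    have hYB : Y = B^2 := by
      rw [hY_def, hB_def, show -(2*(p:ℝ)*t) = ((2:ℕ):ℝ)*(-((p:ℝ)*t)) by push_cast; ring,
        Real.exp_nat_mul]
    rw [Real.cosh_eq, Real.sinh_eq, hYB, div_div_div_comm, div_self (two_ne_zero), div_one,
      div_eq_div_iff hABne hB2]
    linear_combination (-2*B) * hAB
  have eqA : (1+Y)/(1-Y) / ((X⁻¹-X)/2)
      = 2*X*(1-X^2)⁻¹*(1-Y)⁻¹ + 2*X*Y*(1-X^2)⁻¹*(1-Y)⁻¹ := by
    have e : (X⁻¹-X)/2 = (1-X^2)/(2*X) := by field_simp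
    rw [e, div_div_eq_mul_div, div_eq_mul_inv, div_eq_mul_inv]
    ring
  have eqB : 1 / (2 * p * ((X⁻¹ + X - 2)/4)) = (2/p) * (X/(1-X)^2) := by
    have e2 : (X⁻¹ + X - 2)/4 = (1-X)^2/(4*X) := by field_simp; ring
    rw [e2]
    field_simp
    ring
  rw [ellipticIntegrand, hcoth, hsinh2, hsinhsq, eqA, eqB]

theorem myPointwise (p : ℕ) (hp : 2 ≤ p) {t : ℝ} (ht : 0 < t) :
    HasSum (fun i => myA p i * rexp (-(myP p i) * t)) (ellipticIntegrand p t) := by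
  set X := rexp (-(2*t)) with hX_def
  set Y := rexp (-(2*(p:ℝ)*t)) with hY_def
  have hX0 : 0 < X := Real.exp_pos _
  have hX1 : X < 1 := by rw [hX_def]; apply Real.exp_lt_one_iff.2; nlinarith
  have hp0 : (0:ℝ) < p := by positivity
  have hY0 : 0 < Y := Real.exp_pos _
  have hY1 : Y < 1 := by rw [hY_def]; apply Real.exp_lt_one_iff.2; nlinarith
  have hX2 : X^2 < 1 := by nlinarith
  have hgX : HasSum (fun m : ℕ => (X^2)^m) (1 - X^2)⁻¹ :=
    hasSum_geometric_of_lt_one (by positivity) hX2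
  have hgY : HasSum (fun n : ℕ => Y^n) (1 - Y)⁻¹ :=
    hasSum_geometric_of_lt_one hY0.le hY1
  have hexp1 : ∀ m n : ℕ, rexp (-(2*(1 + 2*(m:ℝ) + p*n)) * t) = X * ((X^2)^m * Y^n) := by
    intro m n
    rw [hX_def, hY_def, ← pow_mul, ← Real.exp_nat_mul, ← Real.exp_nat_mul, ← Real.exp_add,
      ← Real.exp_add]
    congr 1; push_cast; ring
  have hexp2 : ∀ m n : ℕ, rexp (-(2*(1 + (p:ℝ) + 2*(m:ℝ) + p*n)) * t)
      = (X*Y) * ((X^2)^m * Y^n) := by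
    intro m n
    rw [hX_def, hY_def, ← pow_mul, ← Real.exp_nat_mul, ← Real.exp_nat_mul, ← Real.exp_add,
      ← Real.exp_add, ← Real.exp_add]
    congr 1; push_cast; ring
  have hexp3 : ∀ k : ℕ, rexp (-(2*((k:ℝ)+1)) * t) = X^(k+1) := by
    intro k
    rw [hX_def, ← Real.exp_nat_mul]
    congr 1; push_cast; ring
  have hf1 : HasSum (fun m : ℕ => 2*X*(X^2)^m) (2*X*(1-X^2)⁻¹) := by
    simpa [mul_assoc] using hgX.mul_left (2*X)
  have hf2 : HasSum (fun m : ℕ => 2*X*Y*(X^2)^m) (2*X*Y*(1-X^2)⁻¹) := by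
    simpa [mul_assoc] using hgX.mul_left (2*X*Y)
  have hS1 : HasSum (fun mn : ℕ×ℕ => (2*X*(X^2)^mn.1) * Y^mn.2)
      ((2*X*(1-X^2)⁻¹) * (1-Y)⁻¹) :=
    hf1.mul hgY (hf1.summable.mul_of_nonneg hgY.summable
      (fun m => by positivity) (fun n => by positivity))
  have hS2 : HasSum (fun mn : ℕ×ℕ => (2*X*Y*(X^2)^mn.1) * Y^mn.2)
      ((2*X*Y*(1-X^2)⁻¹) * (1-Y)⁻¹) :=
    hf2.mul hgY (hf2.summable.mul_of_nonneg hgY.summable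
      (fun m => by positivity) (fun n => by positivity))
  have hnorm : ‖X‖ < 1 := by rw [Real.norm_eq_abs, abs_of_pos hX0]; exact hX1
  have hg3 := hasSum_coe_mul_geometric_of_norm_lt_one hnorm
  have hS3 : HasSum (fun k : ℕ => ((k:ℝ)+1) * X^(k+1)) (X/(1-X)^2) := by
    have h2 := (hasSum_nat_add_iff' (f := fun n : ℕ => (n:ℝ)*X^n) 1).2 hg3
    simp only [Finset.range_one, Finset.sum_singleton, Nat.cast_zero, zero_mul, sub_zero,
      Nat.cast_add, Nat.cast_one] at h2
    exact h2
  have hS3' : HasSum (fun k : ℕ => (-(2/(p:ℝ)) * ((k:ℝ)+1)) * X^(k+1))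
      (-(2/(p:ℝ)) * (X/(1-X)^2)) := by
    simpa [mul_assoc] using hS3.mul_left (-(2/(p:ℝ)))
  have e1 : (fun mn : ℕ×ℕ => myA p (Sum.inl mn) * rexp (-(myP p (Sum.inl mn)) * t))
      = fun mn : ℕ×ℕ => (2*X*(X^2)^mn.1) * Y^mn.2 := by
    funext mn
    simp only [myA, myP, Sum.elim_inl]
    rw [hexp1 mn.1 mn.2]; ring
  have e2 : (fun mn : ℕ×ℕ => myA p (Sum.inr (Sum.inl mn)) * rexp (-(myP p (Sum.inr (Sum.inl mn))) * t))
      = fun mn : ℕ×ℕ => (2*X*Y*(X^2)^mn.1) * Y^mn.2 := by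
    funext mn
    simp only [myA, myP, Sum.elim_inl, Sum.elim_inr]
    rw [hexp2 mn.1 mn.2]; ring
  have e3 : (fun k : ℕ => myA p (Sum.inr (Sum.inr k)) * rexp (-(myP p (Sum.inr (Sum.inr k))) * t))
      = fun k : ℕ => (-(2/(p:ℝ)) * ((k:ℝ)+1)) * X^(k+1) := by
    funext k
    simp only [myA, myP, Sum.elim_inr]
    rw [hexp3 k]
  have htot := myHasSum_sumElim (e1 ▸ hS1) (myHasSum_sumElim (e2 ▸ hS2) (e3 ▸ hS3'))
  have efun : (fun i => myA p i * rexp (-(myP p i) * t))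
      = Sum.elim (fun mn : ℕ×ℕ => myA p (Sum.inl mn) * rexp (-(myP p (Sum.inl mn)) * t))
        (Sum.elim (fun mn : ℕ×ℕ => myA p (Sum.inr (Sum.inl mn)) * rexp (-(myP p (Sum.inr (Sum.inl mn))) * t))
          (fun k : ℕ => myA p (Sum.inr (Sum.inr k)) * rexp (-(myP p (Sum.inr (Sum.inr k))) * t))) := by
    funext i
    rcases i with mn | mn | k <;> rfl
  rw [efun, myClosedForm p hp ht]
  convert htot using 1
  ring

theorem myCosNeZero (s : ℂ) (hs' : ∀ n : ℤ, 2 * s ≠ (n : ℂ)) :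
    Complex.cos ((Real.pi : ℂ) * s) ≠ 0 := by
  intro h
  have h' : Complex.sin ((Real.pi : ℂ) * s + (Real.pi : ℂ)/2) = 0 := by
    rw [Complex.sin_add_pi_div_two]; exact h
  obtain ⟨k, hk⟩ := Complex.sin_eq_zero_iff.1 h'
  have hπ : ((Real.pi : ℝ) : ℂ) ≠ 0 := Complex.ofReal_ne_zero.2 Real.pi_ne_zero
  apply hs' (2*k - 1)
  have h2 : ((Real.pi : ℝ):ℂ) * (2*s) = ((Real.pi : ℝ):ℂ) * (((2*k - 1 : ℤ)):ℂ) := by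
    push_cast
    linear_combination 2*hk
  exact mul_left_cancel₀ hπ h2

theorem myGammaFactor (s : ℂ) (hs : 1 < s.re) (hcos : Complex.cos ((Real.pi : ℂ) * s) ≠ 0) :
    Complex.Gamma (1/2 - s) / ((Real.sqrt Real.pi : ℂ) * Complex.Gamma s) *
      (Complex.Gamma (2*s) * (2:ℂ)^(1 - 2*s)) = 1 / Complex.cos ((Real.pi : ℂ) * s) := by
  have hΓs : Complex.Gamma s ≠ 0 := by
    apply Complex.Gamma_ne_zero
    intro m hm
    rw [hm] at hs
    simp at hs
    have : (0:ℝ) ≤ (m:ℝ) := Nat.cast_nonneg _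
    linarith
  have hsqrtpi : ((Real.sqrt Real.pi : ℝ) : ℂ) ≠ 0 := by
    rw [Complex.ofReal_ne_zero]
    positivity
  have hππ : ((Real.sqrt Real.pi : ℝ):ℂ) * ((Real.sqrt Real.pi : ℝ):ℂ) = ((Real.pi : ℝ):ℂ) := by
    rw [← Complex.ofReal_mul, Real.mul_self_sqrt Real.pi_pos.le]
  have hπ : ((Real.pi : ℝ) : ℂ) ≠ 0 := Complex.ofReal_ne_zero.2 Real.pi_ne_zero
  have dup := Complex.Gamma_mul_Gamma_add_half s
  have refl := Complex.Gamma_mul_Gamma_one_sub (s + 1/2)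
  rw [show (1:ℂ) - (s + 1/2) = 1/2 - s by ring,
    show ((Real.pi:ℝ):ℂ) * (s + 1/2) = (Real.pi:ℝ) * s + (Real.pi:ℝ)/2 by push_cast; ring,
    Complex.sin_add_pi_div_two] at refl
  rw [eq_div_iff hcos] at refl
  have dup' : Complex.Gamma (2*s) * (2:ℂ)^(1 - 2*s)
      = Complex.Gamma s * Complex.Gamma (s + 1/2) / ((Real.sqrt Real.pi : ℝ):ℂ) := by
    rw [eq_div_iff hsqrtpi]; linear_combination -dup
  rw [dup']
  set G1 := Complex.Gamma (1/2 - s) with hG1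
  set G2 := Complex.Gamma s with hG2
  set G3 := Complex.Gamma (s + 1/2) with hG3
  set C := Complex.cos ((Real.pi:ℝ) * s) with hC
  field_simp
  linear_combination refl - hππ

theorem myTermEq (w : ℂ) (A : ℝ) (hA : 0 < A) :
    Complex.Gamma w * (2:ℂ)^(1-w) * ((A : ℂ))^(-w) = Complex.Gamma w * 2 / ((2*A : ℝ):ℂ)^w := by
  have h1 : ((2*A : ℝ):ℂ) = ((2:ℝ):ℂ) * ((A:ℝ):ℂ) := by push_cast; ring
  rw [h1, mul_cpow_ofReal_nonneg (by norm_num) hA.le]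
  have h2 : ((2:ℝ):ℂ) ^ w ≠ 0 := by
    intro h
    rw [Complex.cpow_eq_zero_iff] at h
    simp at h
  have h3 : ((A:ℝ):ℂ) ^ w ≠ 0 := by
    intro h
    rw [Complex.cpow_eq_zero_iff] at h
    exact (Complex.ofReal_ne_zero.2 (ne_of_gt hA)) h.1
  have h4 : ((2:ℝ):ℂ) = (2:ℂ) := by norm_num
  rw [show (1:ℂ)-w = 1+(-w) by ring, h4, Complex.cpow_add _ _ (two_ne_zero), Complex.cpow_one,
    Complex.cpow_neg, Complex.cpow_neg]
  rw [h4] at h2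
  field_simp
theorem mySummable_sumElim {ι κ : Type*} {f : ι → ℝ} {g : κ → ℝ}
    (hf : Summable f) (hg : Summable g) : Summable (Sum.elim f g) :=
  (myHasSum_sumElim hf.hasSum hg.hasSum).summable

theorem myTerm3Eq (w : ℂ) (pC : ℂ) (hpC : pC ≠ 0) (A : ℝ) (hA : 0 < A) :
    Complex.Gamma w * (-(2/pC) * ((A:ℝ):ℂ)) / ((2*A : ℝ):ℂ)^w
      = -(Complex.Gamma w * (2:ℂ)^(1-w)/pC) * (1/((A:ℝ):ℂ)^(w-1)) := by
  have hAne : ((A:ℝ):ℂ) ≠ 0 := Complex.ofReal_ne_zero.2 (ne_of_gt hA)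
  have h1 : (((A:ℝ)):ℂ)^w = ((((A:ℝ)):ℂ))^(w-1) * ((A:ℝ):ℂ) := by
    conv_lhs => rw [show w = (w-1)+1 by ring]
    rw [Complex.cpow_add _ _ hAne, Complex.cpow_one]
  have hsplit : ((2*A : ℝ):ℂ)^w = (2:ℂ)^w * (((((A:ℝ)):ℂ))^(w-1) * ((A:ℝ):ℂ)) := by
    rw [show ((2*A : ℝ):ℂ) = ((2:ℝ):ℂ) * ((A:ℝ):ℂ) by push_cast; ring,
      mul_cpow_ofReal_nonneg (by norm_num) hA.le, Complex.ofReal_ofNat, h1]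
  have hTT : (2:ℂ)^(1-w) * (2:ℂ)^w = 2 := by
    rw [← Complex.cpow_add _ _ two_ne_zero, show (1:ℂ)-w+w = 1 by ring, Complex.cpow_one]
  have h2w : (2:ℂ)^w ≠ 0 := by
    intro h; rw [Complex.cpow_eq_zero_iff] at h; simp at h
  have hBne : ((((A:ℝ)):ℂ))^(w-1) ≠ 0 := by
    intro h; rw [Complex.cpow_eq_zero_iff] at h; exact hAne h.1
  rw [hsplit]
  field_simp
  linear_combination (Complex.Gamma w) * hTT

theorem elliptic_zeta_secant_form (p : ℕ) (hp : 2 ≤ p) (s : ℂ) (hs : 1 < s.re)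
    (hs' : ∀ n : ℤ, 2 * s ≠ (n : ℂ)) :
    (Complex.Gamma (1 / 2 - s) / ((Real.sqrt Real.pi : ℂ) * Complex.Gamma s)) *
        ∫ x in Set.Ioi (0 : ℝ), (x : ℂ) ^ (2 * s - 1) * (ellipticIntegrand p x : ℂ) =
      (1 / Complex.cos (Real.pi * s)) *
        ((∑' mn : ℕ × ℕ, (1 + 2 * (mn.1 : ℂ) + p * mn.2) ^ (-(2 * s))) +
          (∑' mn : ℕ × ℕ, (1 + (p : ℂ) + 2 * mn.1 + p * mn.2) ^ (-(2 * s))) -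
          (1 / p) * riemannZeta (2 * s - 1)) := by
  have hp0 : (0:ℝ) < p := by positivity
  have hpC : ((p:ℕ):ℂ) ≠ 0 := Nat.cast_ne_zero.2 (by omega)
  have hrw : (2*s).re = 2*s.re := by simp [Complex.mul_re]
  set r : ℝ := (2*s).re with hr_def
  have hr2 : 2 < r := by rw [hrw]; linarith
  have hr0 : 0 < r := by linarith
  have hcos := myCosNeZero s hs'
  set F : ℝ → ℂ := fun x => ((ellipticIntegrand p x : ℝ) : ℂ) with hF_def
  have hpos : ∀ i, ((myA p i : ℝ):ℂ) = 0 ∨ 0 < myP p i := by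
    intro i
    right
    rcases i with mn | mn | k <;> simp only [myP, Sum.elim_inl, Sum.elim_inr] <;> positivity
  have hF : ∀ t ∈ Set.Ioi (0:ℝ), HasSum
      (fun i => ((myA p i : ℝ):ℂ) * ((rexp (-(myP p i) * t) : ℝ):ℂ)) (F t) := by
    intro t ht
    have h := myPointwise p hp ht
    have h2 := Complex.hasSum_ofReal.2 h
    have efun : (fun i => (((myA p i * rexp (-(myP p i) * t) : ℝ)):ℂ))
        = fun i => ((myA p i : ℝ):ℂ) * ((rexp (-(myP p i) * t) : ℝ):ℂ) := by
      funext i; push_cast; ring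
    exact efun ▸ h2
  -- norm summability
  have hc1 : Summable (fun mn : ℕ×ℕ => ‖(((2:ℝ)):ℂ)‖ / (2*(1 + 2*(mn.1:ℝ) + p*mn.2)) ^ r) := by
    refine Summable.of_nonneg_of_le (fun mn => by positivity) (fun mn => ?_)
      ((myKeySummable p hp 0 le_rfl hr2).mul_left 2)
    have hA : (0:ℝ) < 1 + 2*(mn.1:ℝ) + p*mn.2 := by positivity
    have e0 : (1:ℝ) + 0 + 2*(mn.1:ℝ) + p*mn.2 = 1 + 2*(mn.1:ℝ) + p*mn.2 := by ring
    rw [e0]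
    have hnorm2 : ‖(((2:ℝ)):ℂ)‖ = 2 := by simp
    have key : (1 + 2*(mn.1:ℝ) + p*mn.2) ^ r ≤ (2*(1 + 2*(mn.1:ℝ) + p*mn.2)) ^ r :=
      Real.rpow_le_rpow hA.le (by linarith) hr0.le
    calc ‖(((2:ℝ)):ℂ)‖ / (2*(1 + 2*(mn.1:ℝ) + p*mn.2)) ^ r
        = 2 / (2*(1 + 2*(mn.1:ℝ) + p*mn.2)) ^ r := by rw [hnorm2]
      _ ≤ 2 / (1 + 2*(mn.1:ℝ) + p*mn.2) ^ r := by gcongr <;> positivity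
      _ = 2 * (1 + 2*(mn.1:ℝ) + p*mn.2) ^ (-r) := by
          rw [Real.rpow_neg hA.le, div_eq_mul_inv]
  have hc2 : Summable (fun mn : ℕ×ℕ =>
      ‖(((2:ℝ)):ℂ)‖ / (2*(1 + (p:ℝ) + 2*(mn.1:ℝ) + p*mn.2)) ^ r) := by
    refine Summable.of_nonneg_of_le (fun mn => by positivity) (fun mn => ?_)
      ((myKeySummable p hp (p:ℝ) (Nat.cast_nonneg p) hr2).mul_left 2)
    have hA : (0:ℝ) < 1 + (p:ℝ) + 2*(mn.1:ℝ) + p*mn.2 := by positivity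
    have hnorm2 : ‖(((2:ℝ)):ℂ)‖ = 2 := by simp
    have key : (1 + (p:ℝ) + 2*(mn.1:ℝ) + p*mn.2) ^ r
        ≤ (2*(1 + (p:ℝ) + 2*(mn.1:ℝ) + p*mn.2)) ^ r :=
      Real.rpow_le_rpow hA.le (by linarith) hr0.le
    calc ‖(((2:ℝ)):ℂ)‖ / (2*(1 + (p:ℝ) + 2*(mn.1:ℝ) + p*mn.2)) ^ r
        = 2 / (2*(1 + (p:ℝ) + 2*(mn.1:ℝ) + p*mn.2)) ^ r := by rw [hnorm2]
      _ ≤ 2 / (1 + (p:ℝ) + 2*(mn.1:ℝ) + p*mn.2) ^ r := by gcongr <;> positivity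
      _ = 2 * (1 + (p:ℝ) + 2*(mn.1:ℝ) + p*mn.2) ^ (-r) := by
          rw [Real.rpow_neg hA.le, div_eq_mul_inv]
  have hc3 : Summable (fun k : ℕ =>
      ‖((-(2/(p:ℝ)) * ((k:ℝ)+1) : ℝ):ℂ)‖ / (2*((k:ℝ)+1)) ^ r) := by
    have hshift := mySummable_shift (t := r - 1) (by linarith)
    refine Summable.of_nonneg_of_le (fun k => by positivity) (fun k => ?_) hshift
    · have hk : (0:ℝ) < (k:ℝ)+1 := by positivity
      have hnorm : ‖((-(2/(p:ℝ)) * ((k:ℝ)+1) : ℝ):ℂ)‖ = (2/(p:ℝ)) * ((k:ℝ)+1) := by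
        have h2p : (0:ℝ) < 2/(p:ℝ) := by positivity
        rw [Complex.norm_real, Real.norm_eq_abs, abs_of_nonpos (by nlinarith), neg_mul,
          neg_neg]
      rw [hnorm]
      have key1 : (2/(p:ℝ)) * ((k:ℝ)+1) ≤ (k:ℝ)+1 := by
        have h21 : (2/(p:ℝ)) ≤ 1 := by
          rw [div_le_one hp0]; exact_mod_cast hp
        nlinarith
      have key2 : ((k:ℝ)+1) ^ r ≤ (2*((k:ℝ)+1)) ^ r :=
        Real.rpow_le_rpow hk.le (by linarith) hr0.le
      calc (2/(p:ℝ)) * ((k:ℝ)+1) / (2*((k:ℝ)+1)) ^ r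
          ≤ ((k:ℝ)+1) / ((k:ℝ)+1) ^ r :=
            div_le_div₀ (by positivity) key1 (by positivity) key2
        _ = ((k:ℝ)+1) ^ ((1:ℝ)-r) := by rw [Real.rpow_sub hk, Real.rpow_one]
        _ = ((k:ℝ)+1) ^ (-(r-1)) := by ring_nf
  have hsum : Summable (fun i => ‖((myA p i:ℝ):ℂ)‖ / myP p i ^ r) := by
    have efun : (fun i => ‖((myA p i:ℝ):ℂ)‖ / myP p i ^ r)
        = Sum.elim (fun mn : ℕ×ℕ => ‖(((2:ℝ)):ℂ)‖ / (2*(1 + 2*(mn.1:ℝ) + p*mn.2)) ^ r)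
            (Sum.elim (fun mn : ℕ×ℕ =>
                ‖(((2:ℝ)):ℂ)‖ / (2*(1 + (p:ℝ) + 2*(mn.1:ℝ) + p*mn.2)) ^ r)
              (fun k : ℕ => ‖((-(2/(p:ℝ)) * ((k:ℝ)+1) : ℝ):ℂ)‖ / (2*((k:ℝ)+1)) ^ r)) := by
      funext i; rcases i with mn | mn | k <;> rfl
    rw [efun]
    exact mySummable_sumElim hc1 (mySummable_sumElim hc2 hc3)
  have hMel := hasSum_mellin hpos hr0 hF hsum
  -- complex summability of the zeta-type series
  have hS1sum : Summable (fun mn : ℕ×ℕ => ((1:ℂ) + 2*(mn.1:ℂ) + (p:ℂ)*mn.2) ^ (-(2*s))) := by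
    apply Summable.of_norm
    refine (myKeySummable p hp 0 le_rfl hr2).congr fun mn => ?_
    have hA : (0:ℝ) < 1 + 2*(mn.1:ℝ) + p*mn.2 := by positivity
    rw [show ((1:ℂ) + 2*(mn.1:ℂ) + (p:ℂ)*mn.2) = ((1 + 2*(mn.1:ℝ) + p*mn.2 : ℝ):ℂ) by
      push_cast; ring]
    rw [Complex.norm_cpow_eq_rpow_re_of_pos hA, Complex.neg_re, hrw]
    norm_num [Complex.mul_re]
  have hS2sum : Summable (fun mn : ℕ×ℕ =>
      ((1:ℂ) + (p:ℂ) + 2*(mn.1:ℂ) + (p:ℂ)*mn.2) ^ (-(2*s))) := by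
    apply Summable.of_norm
    refine (myKeySummable p hp (p:ℝ) (Nat.cast_nonneg p) hr2).congr fun mn => ?_
    have hA : (0:ℝ) < 1 + (p:ℝ) + 2*(mn.1:ℝ) + p*mn.2 := by positivity
    rw [show ((1:ℂ) + (p:ℂ) + 2*(mn.1:ℂ) + (p:ℂ)*mn.2)
        = ((1 + (p:ℝ) + 2*(mn.1:ℝ) + p*mn.2 : ℝ):ℂ) by push_cast; ring]
    rw [Complex.norm_cpow_eq_rpow_re_of_pos hA, Complex.neg_re, hrw]
    norm_num [Complex.mul_re]
  -- zeta
  have hre1 : 1 < (2*s-1).re := by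
    simp only [Complex.sub_re, Complex.one_re, Complex.mul_re]
    simp
    linarith
  have hzsummable : Summable (fun n : ℕ => 1/((n:ℂ)+1)^(2*s-1)) := by
    apply Summable.of_norm
    refine (mySummable_shift (t := (2*s-1).re) hre1).congr fun n => ?_
    have hk : (0:ℝ) < (n:ℝ)+1 := by positivity
    rw [show ((n:ℂ)+1) = (((n:ℝ)+1 : ℝ):ℂ) by push_cast; ring]
    rw [norm_div, norm_one, Complex.norm_cpow_eq_rpow_re_of_pos hk,
      Real.rpow_neg hk.le, one_div]
  have hZ := hzsummable.hasSum
  rw [← zeta_eq_tsum_one_div_nat_add_one_cpow hre1] at hZ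
  -- value-side component sums
  set K := Complex.Gamma (2*s) * (2:ℂ)^(1-2*s) with hK
  have hV1 : HasSum (fun mn : ℕ×ℕ =>
      Complex.Gamma (2*s) * ((myA p (Sum.inl mn) : ℝ):ℂ) / ((myP p (Sum.inl mn) : ℝ):ℂ) ^ (2*s))
      (K * ∑' mn : ℕ×ℕ, ((1:ℂ) + 2*(mn.1:ℂ) + (p:ℂ)*mn.2) ^ (-(2*s))) := by
    have h := hS1sum.hasSum.mul_left K
    have efun : (fun mn : ℕ×ℕ => K * (((1:ℂ) + 2*(mn.1:ℂ) + (p:ℂ)*mn.2) ^ (-(2*s))))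
        = fun mn : ℕ×ℕ => Complex.Gamma (2*s) * ((myA p (Sum.inl mn) : ℝ):ℂ)
            / ((myP p (Sum.inl mn) : ℝ):ℂ) ^ (2*s) := by
      funext mn
      simp only [myA, myP, Sum.elim_inl]
      have hA : (0:ℝ) < 1 + 2*(mn.1:ℝ) + p*mn.2 := by positivity
      rw [show ((1:ℂ) + 2*(mn.1:ℂ) + (p:ℂ)*mn.2) = ((1 + 2*(mn.1:ℝ) + p*mn.2 : ℝ):ℂ) by
        push_cast; ring]
      rw [hK, myTermEq (2*s) _ hA]
      norm_num
    exact efun ▸ h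
  have hV2 : HasSum (fun mn : ℕ×ℕ =>
      Complex.Gamma (2*s) * ((myA p (Sum.inr (Sum.inl mn)) : ℝ):ℂ)
        / ((myP p (Sum.inr (Sum.inl mn)) : ℝ):ℂ) ^ (2*s))
      (K * ∑' mn : ℕ×ℕ, ((1:ℂ) + (p:ℂ) + 2*(mn.1:ℂ) + (p:ℂ)*mn.2) ^ (-(2*s))) := by
    have h := hS2sum.hasSum.mul_left K
    have efun : (fun mn : ℕ×ℕ => K * (((1:ℂ) + (p:ℂ) + 2*(mn.1:ℂ) + (p:ℂ)*mn.2) ^ (-(2*s))))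
        = fun mn : ℕ×ℕ => Complex.Gamma (2*s) * ((myA p (Sum.inr (Sum.inl mn)) : ℝ):ℂ)
            / ((myP p (Sum.inr (Sum.inl mn)) : ℝ):ℂ) ^ (2*s) := by
      funext mn
      simp only [myA, myP, Sum.elim_inl, Sum.elim_inr]
      have hA : (0:ℝ) < 1 + (p:ℝ) + 2*(mn.1:ℝ) + p*mn.2 := by positivity
      rw [show ((1:ℂ) + (p:ℂ) + 2*(mn.1:ℂ) + (p:ℂ)*mn.2)
          = ((1 + (p:ℝ) + 2*(mn.1:ℝ) + p*mn.2 : ℝ):ℂ) by push_cast; ring]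
      rw [hK, myTermEq (2*s) _ hA]
      norm_num
    exact efun ▸ h
  have hV3 : HasSum (fun k : ℕ =>
      Complex.Gamma (2*s) * ((myA p (Sum.inr (Sum.inr k)) : ℝ):ℂ)
        / ((myP p (Sum.inr (Sum.inr k)) : ℝ):ℂ) ^ (2*s))
      (-(K/((p:ℕ):ℂ)) * riemannZeta (2*s-1)) := by
    have h := hZ.mul_left (-(K/((p:ℕ):ℂ)))
    have efun : (fun k : ℕ => -(K/((p:ℕ):ℂ)) * (1/((k:ℂ)+1)^(2*s-1)))
        = fun k : ℕ => Complex.Gamma (2*s) * ((myA p (Sum.inr (Sum.inr k)) : ℝ):ℂ)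
            / ((myP p (Sum.inr (Sum.inr k)) : ℝ):ℂ) ^ (2*s) := by
      funext k
      simp only [myA, myP, Sum.elim_inr]
      have hk : (0:ℝ) < (k:ℝ)+1 := by positivity
      rw [show ((k:ℂ)+1) = (((k:ℝ)+1 : ℝ):ℂ) by push_cast; ring]
      rw [show ((((-(2/(p:ℝ)) * ((k:ℝ)+1)) : ℝ)):ℂ)
          = -(2/((p:ℕ):ℂ)) * (((k:ℝ)+1 : ℝ):ℂ) by push_cast; ring]
      rw [hK, ← myTerm3Eq (2*s) ((p:ℕ):ℂ) hpC _ hk]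
    exact efun ▸ h
  -- assemble and identify with the Mellin transform
  have hTot := myHasSum_sumElim hV1 (myHasSum_sumElim hV2 hV3)
  have efun2 : (fun i => Complex.Gamma (2*s) * ((myA p i : ℝ):ℂ) / ((myP p i : ℝ):ℂ) ^ (2*s))
      = Sum.elim (fun mn : ℕ×ℕ =>
          Complex.Gamma (2*s) * ((myA p (Sum.inl mn) : ℝ):ℂ)
            / ((myP p (Sum.inl mn) : ℝ):ℂ) ^ (2*s))
        (Sum.elim (fun mn : ℕ×ℕ =>
            Complex.Gamma (2*s) * ((myA p (Sum.inr (Sum.inl mn)) : ℝ):ℂ)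
              / ((myP p (Sum.inr (Sum.inl mn)) : ℝ):ℂ) ^ (2*s))
          (fun k : ℕ =>
            Complex.Gamma (2*s) * ((myA p (Sum.inr (Sum.inr k)) : ℝ):ℂ)
              / ((myP p (Sum.inr (Sum.inr k)) : ℝ):ℂ) ^ (2*s))) := by
    funext i; rcases i with mn | mn | k <;> rfl
  rw [efun2] at hMel
  have hMelEq := hMel.unique hTot
  have hInt : mellin F (2*s)
      = ∫ x in Set.Ioi (0:ℝ), (x:ℂ)^(2*s-1) * ((ellipticIntegrand p x : ℝ):ℂ) := by
    simp only [mellin, hF_def, smul_eq_mul]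
  rw [← hInt, hMelEq]
  have hGF := myGammaFactor s hs hcos
  rw [show Complex.Gamma (1/2 - s) / ((Real.sqrt Real.pi : ℂ) * Complex.Gamma s) *
      (K * (∑' mn : ℕ×ℕ, ((1:ℂ) + 2*(mn.1:ℂ) + (p:ℂ)*mn.2) ^ (-(2*s)))
        + (K * ∑' mn : ℕ×ℕ, ((1:ℂ) + (p:ℂ) + 2*(mn.1:ℂ) + (p:ℂ)*mn.2) ^ (-(2*s))
          + -(K/((p:ℕ):ℂ)) * riemannZeta (2*s-1)))
    = (Complex.Gamma (1/2 - s) / ((Real.sqrt Real.pi : ℂ) * Complex.Gamma s) * K)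
        * ((∑' mn : ℕ×ℕ, ((1:ℂ) + 2*(mn.1:ℂ) + (p:ℂ)*mn.2) ^ (-(2*s)))
          + (∑' mn : ℕ×ℕ, ((1:ℂ) + (p:ℂ) + 2*(mn.1:ℂ) + (p:ℂ)*mn.2) ^ (-(2*s)))
          - (1/((p:ℕ):ℂ)) * riemannZeta (2*s-1)) by field_simp; ring]
  rw [hK, hGF]
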